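/- Let Θ be a metric space with metric d, let (Ω, 𝒜, ℙ) be a probability space, let M_n : Ω × Θ → ℝ be stochastic processes indexed by Θ, and let M : Θ → ℝ be a deterministic function. Suppose: (1) sup_{θ ∈ Θ} |M_n(θ) − M(θ)| → 0 in probability; (2) there exists θ_0 ∈ Θ such that M(θ_0) > sup_{θ ∉ G} M(θ) for every open set G containing θ_0; and (3) θ̂_n : Ω → Θ are random elements satisfying M_n(θ̂_n) ≥ sup_{θ ∈ Θ} M_n(θ) − ε_n, where ε_n ≥ 0 are random variables converging to 0 in probability. Then d(θ̂_n, θ_0) → 0 in probability. -/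

import Mathlib

open MeasureTheory Matrix Filter Topology Finset Real

noncomputable section

/-- The `p`-variate normal density `φ_p(x, μ, Σ)`. -/
def mvnpdf (p : ℕ) (x μ : Fin p → ℝ) (S : Matrix (Fin p) (Fin p) ℝ) : ℝ :=
  (2 * π) ^ (-(p : ℝ) / 2) * S.det ^ (-(1 : ℝ) / 2) *
    Real.exp (-(1 / 2) * ((x - μ) ⬝ᵥ (S⁻¹ *ᵥ (x - μ))))

/-- A (generalized) mixture parameter `θ = (π₁,…,π_k, μ₁,…,μ_k, Σ₁,…,Σ_k)`. -/
abbrev MixParam (p k : ℕ) :=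
  (Fin k → ℝ) × (Fin k → Fin p → ℝ) × (Fin k → Matrix (Fin p) (Fin p) ℝ)

/-- `D_j(x, θ) = π_j φ_p(x, μ_j, Σ_j)`. -/
def Dj (p k : ℕ) (θ : MixParam p k) (x : Fin p → ℝ) (j : Fin k) : ℝ :=
  θ.1 j * mvnpdf p x (θ.2.1 j) (θ.2.2 j)

/-- `D_j(x,θ) = D(x,θ) = max_i D_i(x,θ)`, i.e. the `j`-th component attains the maximum. -/
def IsArgMax (p k : ℕ) (θ : MixParam p k) (x : Fin p → ℝ) (j : Fin k) : Prop :=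
  ∀ i, Dj p k θ x i ≤ Dj p k θ x j

open Classical in
/-- The assignment function `Z_j(x,θ) = 1{D_j(x,θ) = D(x,θ)}`. -/
def Zj (p k : ℕ) (θ : MixParam p k) (x : Fin p → ℝ) (j : Fin k) : ℝ :=
  if IsArgMax p k θ x j then 1 else 0

/-- `∫_{ℝ^p} φ_p(x, μ, Σ)^{1+β} dx`. -/
def Jint (p : ℕ) (β : ℝ) (μ : Fin p → ℝ) (S : Matrix (Fin p) (Fin p) ℝ) : ℝ :=
  ∫ x : Fin p → ℝ, mvnpdf p x μ S ^ (1 + β)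

open Classical in
/-- The integrand `m_θ(x)` of the pseudo β-likelihood, with the convention that a summand
is `0` whenever `Z_j(x,θ) = 0`. -/
def mfun (p k : ℕ) (β : ℝ) (θ : MixParam p k) (x : Fin p → ℝ) : ℝ :=
  ∑ j : Fin k,
    if IsArgMax p k θ x j then
      Real.log (θ.1 j) + (1 / β) * mvnpdf p x (θ.2.1 j) (θ.2.2 j) ^ β
        - (1 / (1 + β)) * Jint p β (θ.2.1 j) (θ.2.2 j)
    else 0

/-- The pseudo β-likelihood `L_β(θ, P) = E_P[m_θ(X)]`. -/
def Lbeta (p k : ℕ) (β : ℝ) (θ : MixParam p k) (P : Measure (Fin p → ℝ)) : ℝ :=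
  ∫ x, mfun p k β θ x ∂P

/-- The empirical pseudo β-likelihood `L_β(θ, F_n)` based on observations `xs 0, …, xs (n-1)`. -/
def Lemp (p k : ℕ) (β : ℝ) (θ : MixParam p k) (n : ℕ) (xs : ℕ → Fin p → ℝ) : ℝ :=
  (1 / (n : ℝ)) * ∑ i ∈ Finset.range n, mfun p k β θ (xs i)

/-- `θ` is a genuine mixture parameter: weights in `[0,1]` summing to `1`, and symmetric
positive definite dispersion matrices. -/
def IsMixParam (p k : ℕ) (θ : MixParam p k) : Prop :=
  (∀ j, 0 ≤ θ.1 j ∧ θ.1 j ≤ 1) ∧ (∑ j, θ.1 j) = 1 ∧ ∀ j, (θ.2.2 j).PosDef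

/-- The constrained parameter space `Θ_C`: every eigenvalue of every `Σ_j` is at least `c₁`
(NS constraint) and the ratio of any two eigenvalues is at most `c` (ER constraint `M/m ≤ c`). -/
def InThetaC (p k : ℕ) (c c₁ : ℝ) (θ : MixParam p k) : Prop :=
  IsMixParam p k θ ∧
    (∀ j (h : (θ.2.2 j).IsHermitian) i, c₁ ≤ h.eigenvalues i) ∧
    (∀ j (h : (θ.2.2 j).IsHermitian) i j' (h' : (θ.2.2 j').IsHermitian) i',
      h.eigenvalues i ≤ c * h'.eigenvalues i')

/-- The `k`-component `p`-variate normal mixture measure `Σ_j w_j N_p(μ_j, Σ_j)`. -/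
def mixMeasure (p k : ℕ) (w : Fin k → ℝ) (μ : Fin k → Fin p → ℝ)
    (S : Fin k → Matrix (Fin p) (Fin p) ℝ) : Measure (Fin p → ℝ) :=
  volume.withDensity fun x => ENNReal.ofReal (∑ j, w j * mvnpdf p x (μ j) (S j))

/-- Assumption 1: `max_j π⁰_j ≥ (1+k⁰) β/(1+β)^{1+p/2}` for some `k⁰ > 0`. -/
def Assumption1 (p k : ℕ) (β : ℝ) (w0 : Fin k → ℝ) : Prop :=
  ∃ k0 > 0, ∃ j0 : Fin k, (∀ j, w0 j ≤ w0 j0) ∧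
    (1 + k0) * β / (1 + β) ^ (1 + (p : ℝ) / 2) ≤ w0 j0

/-- The Euclidean distance on the parameter space
`ℝ^k × (ℝ^p)^k × (ℝ^{p×p})^k`. -/
def paramDist (p k : ℕ) (θ θ' : MixParam p k) : ℝ :=
  Real.sqrt ((∑ j, (θ.1 j - θ'.1 j) ^ 2) + (∑ j, ∑ i, (θ.2.1 j i - θ'.2.1 j i) ^ 2)
    + (∑ j, ∑ i, ∑ i', (θ.2.2 j i i' - θ'.2.2 j i i') ^ 2))

end

/-- van der Vaart–Wellner, Corollary 3.2.3: consistency of near-maximizers. -/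
theorem argmax_consistency
    {Θ : Type*} [MetricSpace Θ] {Ω : Type*} [MeasurableSpace Ω]
    (P : Measure Ω) [IsProbabilityMeasure P]
    (Mn : ℕ → Ω → Θ → ℝ) (M : Θ → ℝ) (θ0 : Θ)
    (θhat : ℕ → Ω → Θ) (εn : ℕ → Ω → ℝ)
    (hmeasε : ∀ n, Measurable (εn n))
    (hmeasd : ∀ n, Measurable fun ω => dist (θhat n ω) θ0)
    -- (1) uniform convergence in probability: `sup_θ |M_n(θ) − M(θ)| → 0` in probability
    (h1 : ∀ ε > (0 : ℝ),
      Tendsto (fun n => P {ω | ∃ θ, ε ≤ |Mn n ω θ - M θ|}) atTop (𝓝 0))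
    -- (2) well-separated maximum: `M(θ0) > sup_{θ ∉ G} M(θ)` for every open `G ∋ θ0`
    (h2 : ∀ G : Set Θ, IsOpen G → θ0 ∈ G → ∃ b < M θ0, ∀ θ ∉ G, M θ ≤ b)
    -- (3) near-maximization: `M_n(θ̂_n) ≥ sup_θ M_n(θ) − ε_n` with `ε_n ≥ 0`, `ε_n → 0` in prob.
    (h3pos : ∀ n ω, 0 ≤ εn n ω)
    (h3 : ∀ n ω θ, Mn n ω θ ≤ Mn n ω (θhat n ω) + εn n ω)
    (h3tend : ∀ ε > (0 : ℝ), Tendsto (fun n => P {ω | ε ≤ εn n ω}) atTop (𝓝 0)) :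
    ∀ ε > (0 : ℝ), Tendsto (fun n => P {ω | ε ≤ dist (θhat n ω) θ0}) atTop (𝓝 0) := by
  intro ε hε
  obtain ⟨b, hb, hsep⟩ := h2 (Metric.ball θ0 ε) Metric.isOpen_ball (Metric.mem_ball_self hε)
  set δ := (M θ0 - b) / 3 with hδdef
  have hδ : 0 < δ := by simp only [hδdef]; linarith
  have key : ∀ n, {ω | ε ≤ dist (θhat n ω) θ0} ⊆
      {ω | ∃ θ, δ ≤ |Mn n ω θ - M θ|} ∪ {ω | δ ≤ εn n ω} := by
    intro n ω hω
    simp only [Set.mem_setOf_eq, Set.mem_union]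
    by_contra h
    push_neg at h
    obtain ⟨h1', h2'⟩ := h
    have hnotG : θhat n ω ∉ Metric.ball θ0 ε := by
      simp only [Metric.mem_ball, not_lt]
      exact hω
    have hMb : M (θhat n ω) ≤ b := hsep _ hnotG
    have hA := abs_lt.mp (h1' θ0)
    have hB := abs_lt.mp (h1' (θhat n ω))
    have hC := h3 n ω θ0
    linarith [hA.1, hA.2, hB.1, hB.2]
  have hbound : ∀ n, P {ω | ε ≤ dist (θhat n ω) θ0} ≤
      P {ω | ∃ θ, δ ≤ |Mn n ω θ - M θ|} + P {ω | δ ≤ εn n ω} :=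
    fun n => le_trans (measure_mono (key n)) (measure_union_le _ _)
  have hsum : Tendsto (fun n => P {ω | ∃ θ, δ ≤ |Mn n ω θ - M θ|} + P {ω | δ ≤ εn n ω})
      atTop (𝓝 0) := by
    simpa using (h1 δ hδ).add (h3tend δ hδ)
  exact tendsto_of_tendsto_of_tendsto_of_le_of_le tendsto_const_nhds hsum
    (fun n => zero_le) hbound
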